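/- Suppose q_1 ≥ η for some η > 0. Then q_β ≥ βη + 1 − β for every β ∈ (1, (1−η)^{−1}), and q_α ≥ αη for every α ∈ (0,1). -/

import Mathlib

open Set

/-- Star-shape: a concave function vanishing at 0 is superadditive on rays. -/
lemma star_shape (f : ℝ → ℝ) (hf_conc : ConcaveOn ℝ (Ici (0:ℝ)) f) (hf0 : f 0 = 0)
    {a b : ℝ} (ha : 0 ≤ a) (hb : 0 < b) (hab : a ≤ b) : a * f b ≤ b * f a := by
  have ht : 0 ≤ a / b := div_nonneg ha hb.le
  have hle : a / b ≤ 1 := div_le_one_of_le₀ hab hb.le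
  have ht1 : 0 ≤ 1 - a / b := by linarith
  have := hf_conc.2 (by simp [hb.le] : b ∈ Ici (0:ℝ)) (by simp : (0:ℝ) ∈ Ici (0:ℝ))
    ht ht1 (by ring)
  simp only [smul_eq_mul, mul_zero, add_zero, hf0] at this
  have hab' : a / b * b = a := div_mul_cancel₀ a hb.ne'
  rw [hab'] at this
  have := mul_le_mul_of_nonneg_left this hb.le
  calc a * f b = b * (a / b * f b) := by
        rw [← mul_assoc, mul_div_cancel₀ a hb.ne']
    _ ≤ b * f a := this

/-- If the "excess" `(1-c) * f(cρ) - αec` is nonnegative at `c ∈ [0,1]`, then the largest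
fixed point `q α` is at least `c`. -/
lemma key_lemma (f : ℝ → ℝ) (hf_cont : ContinuousOn f (Ici (0:ℝ)))
    (hf_nonneg : ∀ x ≥ (0:ℝ), 0 ≤ f x)
    (ρ e : ℝ) (hρ : 0 < ρ) (he : 0 < e) (α : ℝ) (hα : 0 < α)
    (Q : ℝ) (hq : IsGreatest {x ∈ Icc (0:ℝ) 1 | x = f (x * ρ) / (α * e + f (x * ρ))} Q)
    (c : ℝ) (hc0 : 0 ≤ c) (hc1 : c ≤ 1) (hc : α * e * c ≤ (1 - c) * f (c * ρ)) :
    c ≤ Q := by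
  set h : ℝ → ℝ := fun x => (1 - x) * f (x * ρ) - α * e * x with hh
  have hcont : ContinuousOn h (Icc c 1) := by
    apply ContinuousOn.sub
    · apply ContinuousOn.mul
      · exact (continuous_const.sub continuous_id).continuousOn
      · apply hf_cont.comp (continuous_mul_right ρ).continuousOn
        intro x hx
        exact mul_nonneg (le_trans hc0 hx.1) hρ.le
    · exact (continuous_const.mul continuous_id).continuousOn
  have h1 : h 1 ≤ 0 := by simp [hh]; positivity
  have hc' : 0 ≤ h c := by simp [hh]; linarith
  have hmem : (0:ℝ) ∈ Icc (h 1) (h c) := ⟨h1, hc'⟩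
  obtain ⟨x0, hx0mem, hx0⟩ := intermediate_value_Icc' hc1 hcont hmem
  have hx00 : 0 ≤ x0 := le_trans hc0 hx0mem.1
  have hF : 0 ≤ f (x0 * ρ) := hf_nonneg _ (mul_nonneg hx00 hρ.le)
  have hD : 0 < α * e + f (x0 * ρ) := by positivity
  have heq : x0 = f (x0 * ρ) / (α * e + f (x0 * ρ)) := by
    rw [eq_div_iff hD.ne']
    simp only [hh] at hx0
    nlinarith [hx0]
  have := hq.2 ⟨⟨hx00, hx0mem.2⟩, heq⟩
  linarith [hx0mem.1]

set_option maxHeartbeats 800000 in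
/-- Let `f : [0,∞) → [0,∞)` be increasing, concave and continuous with
`f 0 = 0`.  Fix `ρ, e > 0` and for `α > 0` let `q α` be the largest solution
`x ∈ [0,1]` of `x = f(xρ)/(αe + f(xρ))`.  If `q 1 ≥ η` for some `η > 0`, then
`q β ≥ βη + 1 − β` for every `β ∈ (1, (1−η)⁻¹)`, and `q α ≥ αη` for every
`α ∈ (0,1)`. -/
theorem stmt3
    (f : ℝ → ℝ)
    (hf_mono : MonotoneOn f (Ici (0:ℝ)))
    (hf_conc : ConcaveOn ℝ (Ici (0:ℝ)) f)
    (hf_cont : ContinuousOn f (Ici (0:ℝ)))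
    (hf_nonneg : ∀ x ≥ (0:ℝ), 0 ≤ f x)
    (hf0 : f 0 = 0)
    (ρ e : ℝ) (hρ : 0 < ρ) (he : 0 < e)
    (q : ℝ → ℝ)
    (hq : ∀ α > (0:ℝ),
      IsGreatest {x ∈ Icc (0:ℝ) 1 | x = f (x * ρ) / (α * e + f (x * ρ))} (q α))
    (η : ℝ) (hη : 0 < η) (hq1 : η ≤ q 1) :
    (∀ β : ℝ, 1 < β → β < (1 - η)⁻¹ → β * η + 1 - β ≤ q β) ∧
    (∀ α : ℝ, 0 < α → α < 1 → α * η ≤ q α) := by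
  -- Facts about Q := q 1
  obtain ⟨⟨⟨hQ0, hQ1⟩, hQeq⟩, _⟩ := hq 1 one_pos
  set Q := q 1 with hQdef
  set F := f (Q * ρ) with hFdef
  have hF0 : 0 ≤ F := hf_nonneg _ (mul_nonneg hQ0 hρ.le)
  have hD : (0:ℝ) < 1 * e + F := by positivity
  have hQe : Q * (1 * e + F) = F := by
    rw [eq_div_iff hD.ne'] at hQeq; exact hQeq
  have hQlt1 : Q < 1 := by
    rcases lt_or_eq_of_le hQ1 with h | h
    · exact h
    · exfalso; rw [h] at hQe; linarith
  have hηQ : η ≤ Q := hq1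
  have hηlt1 : η < 1 := lt_of_le_of_lt hηQ hQlt1
  have hQpos : 0 < Q := lt_of_lt_of_le hη hηQ
  -- Fixed point relation: Q * e = (1 - Q) * F
  have hrel : Q * e = (1 - Q) * F := by nlinarith [hQe]
  constructor
  · -- β case
    intro β hβ1 hβη
    set c := β * η + 1 - β with hcdef
    have h1η : (0:ℝ) < 1 - η := by linarith
    have hβ' : β * (1 - η) < 1 := by
      have := (lt_inv_comm₀ h1η (lt_trans one_pos hβ1)).mpr hβη
      calc β * (1 - η) < (1-η)⁻¹ * (1-η) := by nlinarith
        _ = 1 := inv_mul_cancel₀ h1η.ne'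
    have hc0 : 0 ≤ c := by simp only [hcdef]; nlinarith
    have hcη : c ≤ η := by simp only [hcdef]; nlinarith
    have hcQ : c ≤ Q := le_trans hcη hηQ
    have hc1 : c ≤ 1 := le_trans hcQ hQ1
    apply key_lemma f hf_cont hf_nonneg ρ e hρ he β (lt_trans one_pos hβ1) (q β)
      (hq β (lt_trans one_pos hβ1)) c hc0 hc1
    -- need : β * e * c ≤ (1 - c) * f (c * ρ)
    have hstar : (c * ρ) * F ≤ (Q * ρ) * f (c * ρ) := by
      rw [hFdef]
      exact star_shape f hf_conc hf0 (mul_nonneg hc0 hρ.le) (by positivity)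
        (by nlinarith)
    have hfc : 0 ≤ f (c * ρ) := hf_nonneg _ (mul_nonneg hc0 hρ.le)
    -- (1 - c) = β * (1 - η)
    have h1c : 1 - c = β * (1 - η) := by simp only [hcdef]; ring
    -- c * F ≤ Q * f(cρ), Q * e = (1-Q) * F
    have hstar' : c * F ≤ Q * f (c * ρ) := by
      have h' : ρ * (c * F) ≤ ρ * (Q * f (c * ρ)) := by linarith [hstar]
      exact (mul_le_mul_iff_right₀ hρ).mp h'
    -- goal: β e c ≤ β(1-η) f(cρ).  It suffices e c ≤ (1-η) f(cρ).
    rw [h1c]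
    have key : e * c ≤ (1 - η) * f (c * ρ) := by
      have h1 : (1 - Q) * (c * F) ≤ (1 - Q) * (Q * f (c * ρ)) :=
        mul_le_mul_of_nonneg_left hstar' (by linarith)
      have h2 : (1 - Q) * (c * F) = c * (Q * e) := by rw [hrel]; ring
      have h3 : (1 - Q) * f (c * ρ) ≤ (1 - η) * f (c * ρ) :=
        mul_le_mul_of_nonneg_right (by linarith) hfc
      have h4 : c * e ≤ (1 - Q) * f (c * ρ) := by
        have h' : Q * (c * e) ≤ Q * ((1 - Q) * f (c * ρ)) := by linarith [h1, h2]
        exact (mul_le_mul_iff_right₀ hQpos).mp h'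
      linarith
    have hβpos : (0:ℝ) < β := lt_trans one_pos hβ1
    calc β * e * c = β * (e * c) := by ring
      _ ≤ β * ((1 - η) * f (c * ρ)) := mul_le_mul_of_nonneg_left key hβpos.le
      _ = β * (1 - η) * f (c * ρ) := by ring
  · -- α case
    intro α hα0 hα1
    set c := α * η with hcdef
    have hcη : c ≤ η := by nlinarith
    have hcQ : c ≤ Q := le_trans hcη hηQ
    have hc0 : 0 ≤ c := by positivity
    have hc1 : c ≤ 1 := le_trans hcQ hQ1
    apply key_lemma f hf_cont hf_nonneg ρ e hρ he α hα0 (q α) (hq α hα0) c hc0 hc1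
    have hstar : (c * ρ) * F ≤ (Q * ρ) * f (c * ρ) := by
      rw [hFdef]
      exact star_shape f hf_conc hf0 (mul_nonneg hc0 hρ.le) (by positivity) (by nlinarith)
    have hfc : 0 ≤ f (c * ρ) := hf_nonneg _ (mul_nonneg hc0 hρ.le)
    have hstar' : c * F ≤ Q * f (c * ρ) := by
      have h' : ρ * (c * F) ≤ ρ * (Q * f (c * ρ)) := by linarith [hstar]
      exact (mul_le_mul_iff_right₀ hρ).mp h'
    -- goal: α e c ≤ (1-c) f(cρ)
    have h1 : (1 - Q) * (c * F) ≤ (1 - Q) * (Q * f (c * ρ)) :=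
      mul_le_mul_of_nonneg_left hstar' (by linarith)
    have h2 : (1 - Q) * (c * F) = c * (Q * e) := by rw [hrel]; ring
    have h3 : (1 - Q) * f (c * ρ) ≤ (1 - c) * f (c * ρ) :=
      mul_le_mul_of_nonneg_right (by linarith) hfc
    have h4 : c * e ≤ (1 - Q) * f (c * ρ) := by
      have h' : Q * (c * e) ≤ Q * ((1 - Q) * f (c * ρ)) := by linarith [h1, h2]
      exact (mul_le_mul_iff_right₀ hQpos).mp h'
    have h5 : α * e * c ≤ c * e := by
      have := mul_le_mul_of_nonneg_right hα1.le (mul_nonneg he.le hc0)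
      linarith [this]
    linarith
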